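/- Let R be an order whose additive group is generated by its autopotent elements. Then R is reduced. -/

import Mathlib

open TensorProduct Polynomial

/-- The polynomial `X^(n+1) - X` is squarefree over `ℚ` for `n ≥ 1`. -/
lemma squarefree_X_pow_succ_sub_X {n : ℕ} (hn : 0 < n) :
    Squarefree ((X : ℚ[X]) ^ (n + 1) - X) := by
  have hfac : (X : ℚ[X]) ^ (n + 1) - X = X * (X ^ n - 1) := by ring
  rw [hfac]
  have h1 : (X : ℚ[X]).Separable := separable_X
  have h2 : ((X : ℚ[X]) ^ n - 1).Separable := by
    have := Polynomial.separable_X_pow_sub_C (F := ℚ) (1 : ℚ)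
      (by exact_mod_cast hn.ne') one_ne_zero
    simpa using this
  have hcop : IsCoprime (X : ℚ[X]) (X ^ n - 1) := by
    refine ⟨X ^ (n - 1), -1, ?_⟩
    have : (X : ℚ[X]) ^ (n - 1) * X = X ^ n := by
      rw [← pow_succ, Nat.sub_add_cancel hn]
    rw [this]; ring
  exact (h1.mul h2 hcop).squarefree

/-- An order whose additive group is generated by its autopotent elements
(elements `x` with `x^(n+1) = x` for some `n ≥ 1`) is reduced. -/
theorem reduced_of_generated_by_autopotents
    {R : Type u} [CommRing R] [Module.Free ℤ R] [Module.Finite ℤ R]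
    (h : AddSubgroup.closure {x : R | ∃ n : ℕ, 0 < n ∧ x ^ (n + 1) = x} = ⊤) :
    IsReduced R := by
  refine ⟨fun z hz => ?_⟩
  -- rationalization
  set V := ℚ ⊗[ℤ] R with hV
  let j : R →ₗ[ℤ] V := TensorProduct.mk ℤ ℚ R 1
  have hjapp : ∀ x : R, j x = (1 : ℚ) ⊗ₜ[ℤ] x := fun _ => rfl
  -- injectivity of j
  have hj : Function.Injective j := by
    let b := Module.Free.chooseBasis ℤ R
    intro x y hxy
    have hrepr : ∀ i, b.repr x i = b.repr y i := by
      intro i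
      have := congrArg (fun v => (b.baseChange ℚ).repr v i) hxy
      simp only [hjapp, Module.Basis.baseChange_repr_tmul, zsmul_eq_mul, mul_one] at this
      exact_mod_cast this
    exact b.repr.injective (Finsupp.ext hrepr)
  -- left multiplication
  let L : V →ₐ[ℚ] Module.End ℚ V := Algebra.lmul ℚ V
  have hcomm : ∀ a c : V, Commute (L a) (L c) := fun a c => by
    simpa [Commute, SemiconjBy, ← map_mul] using congrArg L (mul_comm a c)
  have hVfin : FiniteDimensional ℚ V := Module.Finite.base_change ℤ ℚ R
  -- semisimplicity for all elements of R
  have key : ∀ x : R, (L (j x)).IsSemisimple := by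
    intro x
    have hx : x ∈ AddSubgroup.closure {x : R | ∃ n : ℕ, 0 < n ∧ x ^ (n + 1) = x} := by
      rw [h]; trivial
    refine AddSubgroup.closure_induction ?_ ?_ ?_ ?_ hx
    · -- generators: autopotent elements
      rintro x ⟨n, hn, hxn⟩
      refine Module.End.isSemisimple_of_squarefree_aeval_eq_zero
        (squarefree_X_pow_succ_sub_X hn) ?_
      have hpow : (j x) ^ (n + 1) = j x := by
        simp only [hjapp]
        rw [Algebra.TensorProduct.tmul_pow, one_pow, hxn]
      rw [map_sub, map_pow, aeval_X, ← map_pow, hpow, sub_self]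
    · -- zero
      simp only [map_zero]
      exact Module.End.isSemisimple_zero (R := ℚ) (M := V)
    · -- addition
      intro a c _ _ ha hc
      have := Module.End.IsSemisimple.add_of_commute (hcomm (j a) (j c)) ha hc
      rwa [← map_add, ← map_add] at this
    · -- negation
      intro a _ ha
      rw [map_neg, map_neg]
      exact Module.End.isSemisimple_neg.mpr ha
  -- nilpotent + semisimple ⇒ zero
  obtain ⟨k, hk⟩ := hz
  have hLnil : IsNilpotent (L (j z)) := by
    refine ⟨k, ?_⟩
    rw [← map_pow]
    have hzero : (j z) ^ k = 0 := by
      simp only [hjapp]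
      rw [Algebra.TensorProduct.tmul_pow, one_pow, hk, tmul_zero]
    rw [hzero, map_zero]
  have hL0 : L (j z) = 0 :=
    Module.End.eq_zero_of_isNilpotent_isSemisimple hLnil (key z)
  have : j z = 0 := by
    have := congrArg (fun f : Module.End ℚ V => f 1) hL0
    simpa [L, Algebra.lmul] using this
  exact hj (by rw [this, map_zero])
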